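/- Let p ≥ 2 and let u = a^{ε₀} t a^{ε₁} t ⋯ t a^{ε_q} be a word in BS(1,p) with |ε_i| < p for 0 ≤ i < q and |ε_q| < 3p. Then any geodesic representative v of u, when put in the normal form t⁻ᵈ a^{ψ₀} t ⋯ t a^{ψ_r} t⁻ˡ with ψ₀ ≠ 0 whenever d > 0 and |ψ_i| < p for i < r, must have d = 0; i.e. v has the form a^{η₀} t ⋯ t a^{η_q} or a^{η₀} t ⋯ t a^{η_q} t a^{ρ_{q+1}} t ⋯ t a^{ρ_{q+s}} t⁻ˢ with s > 0. -/
import Mathlib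


/-- The single defining relation of `BS(1,p)`: `t a t⁻¹ a^{-p}`. -/
def BSrel (p : ℕ) : Set (FreeGroup Bool) :=
  {FreeGroup.of true * FreeGroup.of false * (FreeGroup.of true)⁻¹ * (FreeGroup.of false ^ p)⁻¹}

/-- The solvable Baumslag–Solitar group `BS(1,p) = ⟨a, t | t a t⁻¹ = aᵖ⟩`. -/
abbrev BS (p : ℕ) : Type := PresentedGroup (BSrel p)

/-- The generator `a` of `BS(1,p)`. -/
def gena (p : ℕ) : BS p := PresentedGroup.of false

/-- The generator `t` of `BS(1,p)`. -/
def gent (p : ℕ) : BS p := PresentedGroup.of true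

/-- A letter over the alphabet `{a, a⁻¹, t, t⁻¹}`: first component `false` = `a`,
`true` = `t`; second component is the sign (`true` = positive). -/
abbrev Letter : Type := Bool × Bool

/-- Value of a letter in `BS(1,p)`. -/
def letterVal (p : ℕ) : Letter → BS p
  | (g, s) => (if g then gent p else gena p) ^ (if s then (1 : ℤ) else -1)

/-- The element of `BS(1,p)` represented by a word. -/
def wordVal (p : ℕ) (w : List Letter) : BS p := (w.map (letterVal p)).prod

def tP : Letter := (true, true)
def tN : Letter := (true, false)
def aP : Letter := (false, true)
def aN : Letter := (false, false)

/-- `t`-exponent sum of a word. -/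
def texp (w : List Letter) : ℤ := (w.count tP : ℤ) - (w.count tN : ℤ)

/-- A word of type `P`: contains at least one `t` and no `t⁻¹`. -/
def TypeP (w : List Letter) : Prop := tP ∈ w ∧ tN ∉ w

/-- A word of type `N`: contains at least one `t⁻¹` and no `t`. -/
def TypeN (w : List Letter) : Prop := tN ∈ w ∧ tP ∉ w

/-- The word `a^x` (as a string of `|x|` letters). -/
def aWord (x : ℤ) : List Letter := List.replicate x.natAbs (false, decide (0 < x))

/-- The word `a^{ε₀} t a^{ε₁} t ⋯ t a^{ε_q}`. -/
def stackWord (ε : ℕ → ℤ) (q : ℕ) : List Letter :=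
  ((List.range q).map (fun i => aWord (ε i) ++ [tP])).flatten ++ aWord (ε q)

/-- The word `t⁻ᵏ a^{ε₀} t ⋯ t a^{ε_q} t⁻ᵐ`. -/
def canonWord (k : ℕ) (ε : ℕ → ℤ) (q m : ℕ) : List Letter :=
  List.replicate k tN ++ stackWord ε q ++ List.replicate m tN

/-- `ℤ[1/p]` as an additive subgroup of `ℚ`. -/
def Zp (p : ℕ) : AddSubgroup ℚ := AddSubgroup.closure {x : ℚ | ∃ n : ℕ, x = ((p : ℚ))⁻¹ ^ n}


@[ext] structure Aff : Type where
  s : ℚˣ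
  b : ℚ

namespace Aff

instance : Mul Aff := ⟨fun x y => ⟨x.s * y.s, x.b + (x.s : ℚ) * y.b⟩⟩
instance : One Aff := ⟨⟨1, 0⟩⟩
instance : Inv Aff := ⟨fun x => ⟨x.s⁻¹, -((((x.s)⁻¹ : ℚˣ) : ℚ) * x.b)⟩⟩

@[simp] lemma mul_s (x y : Aff) : (x * y).s = x.s * y.s := rfl
@[simp] lemma mul_b (x y : Aff) : (x * y).b = x.b + (x.s : ℚ) * y.b := rfl
@[simp] lemma one_s : (1 : Aff).s = 1 := rfl
@[simp] lemma one_b : (1 : Aff).b = 0 := rfl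
@[simp] lemma inv_s (x : Aff) : (x⁻¹).s = (x.s)⁻¹ := rfl
@[simp] lemma inv_b (x : Aff) : (x⁻¹).b = -((((x.s)⁻¹ : ℚˣ) : ℚ) * x.b) := rfl
@[simp] lemma mk_s (u : ℚˣ) (c : ℚ) : (Aff.mk u c).s = u := rfl
@[simp] lemma mk_b (u : ℚˣ) (c : ℚ) : (Aff.mk u c).b = c := rfl

instance : Group Aff where
  mul_assoc a b c := by ext <;> simp [mul_assoc, mul_add, add_assoc]
  one_mul a := by ext <;> simp
  mul_one a := by ext <;> simp
  inv_mul_cancel a := by ext <;> simp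

def trans : Multiplicative ℚ →* Aff where
  toFun b := ⟨1, b.toAdd⟩
  map_one' := by ext <;> simp
  map_mul' x y := by ext <;> simp

def scale : ℚˣ →* Aff where
  toFun s := ⟨s, 0⟩
  map_one' := rfl
  map_mul' x y := by ext <;> simp

lemma A_zpow (x : ℤ) : (⟨1, 1⟩ : Aff) ^ x = ⟨1, (x : ℚ)⟩ := by
  have h : (⟨1, (1 : ℚ)⟩ : Aff) = trans (Multiplicative.ofAdd 1) := rfl
  rw [h, ← map_zpow]
  ext <;> simp [trans]

lemma A_pow (n : ℕ) : (⟨1, 1⟩ : Aff) ^ n = ⟨1, (n : ℚ)⟩ := by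
  rw [← zpow_natCast, A_zpow]; norm_num

lemma T_zpow (u : ℚˣ) (x : ℤ) : (⟨u, 0⟩ : Aff) ^ x = ⟨u ^ x, 0⟩ := by
  have h : (⟨u, (0 : ℚ)⟩ : Aff) = scale u := rfl
  rw [h, ← map_zpow]; rfl

end Aff

def pQ (p : ℕ) (hp : 2 ≤ p) : ℚˣ :=
  Units.mk0 (p : ℚ) (Nat.cast_ne_zero.mpr (by omega))

@[simp] lemma pQ_val (p : ℕ) (hp : 2 ≤ p) : ((pQ p hp : ℚˣ) : ℚ) = p := rfl

def bsHom (p : ℕ) (hp : 2 ≤ p) : BS p →* Aff :=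
  PresentedGroup.toGroup (f := fun g => if g then (⟨pQ p hp, 0⟩ : Aff) else ⟨1, 1⟩) (by
    intro r hr
    rw [BSrel, Set.mem_singleton_iff] at hr
    subst hr
    have hpne : (p : ℚ) ≠ 0 := Nat.cast_ne_zero.mpr (by omega)
    simp only [map_mul, map_inv, map_pow, FreeGroup.lift_apply_of]
    norm_num
    rw [Aff.A_pow]
    ext
    all_goals simp)

lemma bsHom_a (p : ℕ) (hp : 2 ≤ p) : bsHom p hp (gena p) = ⟨1, 1⟩ := by
  rw [gena, bsHom, PresentedGroup.toGroup.of]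
  norm_num

lemma bsHom_t (p : ℕ) (hp : 2 ≤ p) : bsHom p hp (gent p) = ⟨pQ p hp, 0⟩ := by
  rw [gent, bsHom, PresentedGroup.toGroup.of]
  norm_num

lemma wordVal_append (p : ℕ) (w₁ w₂ : List Letter) :
    wordVal p (w₁ ++ w₂) = wordVal p w₁ * wordVal p w₂ := by
  simp [wordVal]

lemma wordVal_aWord (p : ℕ) (x : ℤ) : wordVal p (aWord x) = gena p ^ x := by
  rw [wordVal, aWord, List.map_replicate, List.prod_replicate]
  by_cases h : 0 < x
  · have hl : letterVal p (false, decide (0 < x)) = gena p := by simp [letterVal, h]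
    rw [hl, ← zpow_natCast, Int.natAbs_of_nonneg h.le]
  · have hl : letterVal p (false, decide (0 < x)) = (gena p)⁻¹ := by simp [letterVal, h]
    rw [hl, inv_pow, ← zpow_natCast, ← zpow_neg]
    congr 1
    omega

lemma wordVal_tN (p k : ℕ) : wordVal p (List.replicate k tN) = gent p ^ (-(k : ℤ)) := by
  rw [wordVal, List.map_replicate, List.prod_replicate]
  have hl : letterVal p tN = (gent p)⁻¹ := by simp [letterVal, tN]
  rw [hl, inv_pow, ← zpow_natCast, ← zpow_neg]

lemma wordVal_tP (p : ℕ) : wordVal p [tP] = gent p := by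
  simp [wordVal, letterVal, tP]

lemma stackWord_succ (ε : ℕ → ℤ) (q : ℕ) :
    stackWord ε (q + 1) = stackWord ε q ++ ([tP] ++ aWord (ε (q + 1))) := by
  simp [stackWord, List.range_succ]

lemma bsHom_stack (p : ℕ) (hp : 2 ≤ p) (ε : ℕ → ℤ) (q : ℕ) :
    bsHom p hp (wordVal p (stackWord ε q)) =
      ⟨(pQ p hp) ^ q, ∑ i ∈ Finset.range (q + 1), (ε i : ℚ) * (p : ℚ) ^ i⟩ := by
  induction q with
  | zero =>
      have h0 : stackWord ε 0 = aWord (ε 0) := by simp [stackWord]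
      rw [h0, wordVal_aWord, map_zpow, bsHom_a, Aff.A_zpow]
      ext <;> simp
  | succ q ih =>
      rw [stackWord_succ, wordVal_append, wordVal_append, map_mul, map_mul, ih,
        wordVal_tP, wordVal_aWord, map_zpow, bsHom_a, bsHom_t, Aff.A_zpow]
      ext
      · simp [pow_succ]
      · simp [Finset.sum_range_succ, pow_succ]
        ring

lemma bsHom_canon (p : ℕ) (hp : 2 ≤ p) (k : ℕ) (ε : ℕ → ℤ) (q m : ℕ) :
    bsHom p hp (wordVal p (canonWord k ε q m)) =
      ⟨(pQ p hp) ^ ((q : ℤ) - k - m),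
        ((p : ℚ) ^ k)⁻¹ * ∑ i ∈ Finset.range (q + 1), (ε i : ℚ) * (p : ℚ) ^ i⟩ := by
  rw [canonWord, wordVal_append, wordVal_append, map_mul, map_mul, wordVal_tN, wordVal_tN,
    bsHom_stack, map_zpow, map_zpow, bsHom_t, Aff.T_zpow, Aff.T_zpow]
  ext
  · have hpne : (p : ℚ) ≠ 0 := Nat.cast_ne_zero.mpr (by omega)
    simp only [Aff.mul_s, Aff.mk_s, Units.val_mul, Units.val_zpow_eq_zpow_val,
      Units.val_pow_eq_pow_val, pQ_val]
    rw [show ((q : ℤ) - k - m) = -(k : ℤ) + q + -(m : ℤ) by ring]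
    rw [zpow_add₀ hpne, zpow_add₀ hpne, zpow_natCast]
  · simp [zpow_neg, zpow_natCast]

/-- a geodesic representative `t⁻ᵈ a^{ψ₀} t ⋯ t a^{ψ_r} t⁻ˡ`
(with `ψ₀ ≠ 0` whenever `d > 0` and `|ψ_i| < p` for `i < r`) of a word
`a^{ε₀} t ⋯ t a^{ε_q}` (with `|ε_i| < p` for `i < q`, `|ε_q| < 3p`) has `d = 0`. -/
theorem stmt10 (p : ℕ) (hp : 2 ≤ p) (ε : ℕ → ℤ) (q : ℕ)
    (hε : ∀ i < q, (ε i).natAbs < p) (hεq : (ε q).natAbs < 3 * p)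
    (d r l : ℕ) (ψ : ℕ → ℤ) (hψ0 : 0 < d → ψ 0 ≠ 0) (hψ : ∀ i < r, (ψ i).natAbs < p)
    (heq : wordVal p (canonWord d ψ r l) = wordVal p (canonWord 0 ε q 0))
    (hgeo : ∀ w' : List Letter, wordVal p w' = wordVal p (canonWord d ψ r l) →
      (canonWord d ψ r l).length ≤ w'.length) :
    d = 0 := by
  by_contra hd0
  have hd : 0 < d := Nat.pos_of_ne_zero hd0
  have hpne : (p : ℚ) ≠ 0 := Nat.cast_ne_zero.mpr (by omega)
  have h1 := congrArg (bsHom p hp) heq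
  rw [bsHom_canon, bsHom_canon, Aff.mk.injEq] at h1
  obtain ⟨hs, hb⟩ := h1
  -- exponent equality
  have hs' : ((p : ℚ)) ^ ((r : ℤ) - d - l) = (p : ℚ) ^ ((q : ℤ) - 0 - 0) := by
    have := congrArg (fun u : ℚˣ => (u : ℚ)) hs
    simpa [Units.val_zpow_eq_zpow_val] using this
  have hexp : (r : ℤ) - d - l = (q : ℤ) - 0 - 0 :=
    zpow_right_injective₀ (by positivity) (by exact_mod_cast (by omega : p ≠ 1)) hs'
  have hr1 : 1 ≤ r := by omega
  -- b-component equality as integers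
  set Cz : ℤ := ∑ i ∈ Finset.range (r + 1), ψ i * (p : ℤ) ^ i with hCz
  set Bz : ℤ := ∑ i ∈ Finset.range (q + 1), ε i * (p : ℤ) ^ i with hBz
  have hcast : (Cz : ℚ) = (p : ℚ) ^ d * (Bz : ℚ) := by
    have hb' : ((p : ℚ) ^ d)⁻¹ * ∑ i ∈ Finset.range (r + 1), (ψ i : ℚ) * (p : ℚ) ^ i
        = ∑ i ∈ Finset.range (q + 1), (ε i : ℚ) * (p : ℚ) ^ i := by
      simpa using hb
    push_cast [hCz, hBz]
    rw [← hb']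
    field_simp
  have hCB : Cz = (p : ℤ) ^ d * Bz := by exact_mod_cast hcast
  have hdvdC : (p : ℤ) ∣ Cz := by
    rw [hCB]
    exact Dvd.dvd.mul_right (dvd_pow_self _ hd.ne') _
  have hsplit : Cz = (p : ℤ) * (∑ i ∈ Finset.range r, ψ (i + 1) * (p : ℤ) ^ i) + ψ 0 := by
    rw [hCz, Finset.sum_range_succ', Finset.mul_sum]
    simp [pow_succ]
    ring_nf
    rw [Finset.sum_congr rfl]
    intro i _
    ring
  have hdvd0 : (p : ℤ) ∣ ψ 0 := by
    have : ψ 0 = Cz - (p : ℤ) * (∑ i ∈ Finset.range r, ψ (i + 1) * (p : ℤ) ^ i) := by omega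
    rw [this]
    exact dvd_sub hdvdC (Dvd.intro _ rfl)
  have hne : ψ 0 ≠ 0 := hψ0 hd
  have habs : p ∣ (ψ 0).natAbs := Int.natCast_dvd.mp hdvd0
  have := Nat.le_of_dvd (Int.natAbs_pos.mpr hne) habs
  have := hψ 0 hr1
  omega
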